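/- For the Skorokhod reflection map on the half-line: given a continuous function X with X(0)=0 and w₀ ≥ 0, define U(t) = max(0, -inf_{0≤s≤t}(w₀ + X(s))) and W(t) = w₀ + X(t) + U(t). Then W(t) ≥ 0 for all t, U is continuous, nondecreasing, U(0)=0, and U increases only at times t where W(t)=0. -/

import Mathlib

open Set

noncomputable def skM (X : ℝ → ℝ) (w₀ t : ℝ) : ℝ := sInf ((fun s => w₀ + X s) '' Icc 0 t)

lemma skM_bdd (X : ℝ → ℝ) (hX : Continuous X) (w₀ t : ℝ) :
    BddBelow ((fun s => w₀ + X s) '' Icc 0 t) :=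
  (isCompact_Icc.image (by continuity)).bddBelow

lemma skM_le (X : ℝ → ℝ) (hX : Continuous X) (w₀ : ℝ) {t x : ℝ} (hx : x ∈ Icc 0 t) :
    skM X w₀ t ≤ w₀ + X x :=
  csInf_le (skM_bdd X hX w₀ t) (mem_image_of_mem _ hx)

lemma skM_anti (X : ℝ → ℝ) (hX : Continuous X) (w₀ : ℝ) {s t : ℝ} (hs : 0 ≤ s) (hst : s ≤ t) :
    skM X w₀ t ≤ skM X w₀ s :=
  csInf_le_csInf (skM_bdd X hX w₀ t) ((nonempty_Icc.2 hs).image _)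
    (image_mono (Icc_subset_Icc le_rfl hst))

lemma skM_min (X : ℝ → ℝ) (hX : Continuous X) (w₀ : ℝ) {t : ℝ} (ht : 0 ≤ t) :
    ∃ u ∈ Icc 0 t, (∀ x ∈ Icc 0 t, w₀ + X u ≤ w₀ + X x) ∧ skM X w₀ t = w₀ + X u := by
  obtain ⟨u, hu, hmin⟩ := isCompact_Icc.exists_isMinOn (nonempty_Icc.2 ht)
    (Continuous.continuousOn (by continuity : Continuous fun s => w₀ + X s))
  refine ⟨u, hu, fun x hx => hmin hx, le_antisymm (skM_le X hX w₀ hu) ?_⟩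
  exact le_csInf ((nonempty_Icc.2 ht).image _) (by rintro y ⟨x, hx, rfl⟩; exact hmin hx)

lemma skM_key (X : ℝ → ℝ) (hX : Continuous X) (w₀ : ℝ) {s t : ℝ} (hs : 0 ≤ s) (hst : s ≤ t) :
    ∃ u, s ≤ u ∧ u ≤ t ∧ skM X w₀ s - skM X w₀ t ≤ X s - X u := by
  obtain ⟨u, hu, hmin, heq⟩ := skM_min X hX w₀ (hs.trans hst)
  rcases le_or_gt u s with h | h
  · refine ⟨s, le_rfl, hst, ?_⟩
    have h1 : skM X w₀ s ≤ w₀ + X u := skM_le X hX w₀ ⟨hu.1, h⟩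
    have h2 := skM_anti X hX w₀ hs hst
    simp only [heq] at *; linarith
  · refine ⟨u, h.le, hu.2, ?_⟩
    have h1 : skM X w₀ s ≤ w₀ + X s := skM_le X hX w₀ ⟨hs, le_rfl⟩
    linarith [heq]

lemma skU_eq (X : ℝ → ℝ) (w₀ t : ℝ) :
    max 0 (-(sInf ((fun s => w₀ + X s) '' Icc 0 t))) = max 0 (-(skM X w₀ t)) := rfl

lemma skU_mono (X : ℝ → ℝ) (hX : Continuous X) (w₀ : ℝ) :
    MonotoneOn (fun t => max 0 (-(sInf ((fun s => w₀ + X s) '' Icc 0 t)))) (Ici 0) := by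
  intro s hs t _ hst
  exact max_le_max le_rfl (neg_le_neg (skM_anti X hX w₀ hs hst))

theorem skorokhod_reflection' (X : ℝ → ℝ) (hX : Continuous X) (hX0 : X 0 = 0)
    (w₀ : ℝ) (hw₀ : 0 ≤ w₀) :
    (∀ t, 0 ≤ t → 0 ≤ w₀ + X t + max 0 (-(skM X w₀ t))) ∧
    ContinuousOn (fun t => max 0 (-(skM X w₀ t))) (Ici 0) ∧
    (max 0 (-(skM X w₀ 0)) = 0) ∧
    (∀ s t, 0 ≤ s → s < t → max 0 (-(skM X w₀ s)) < max 0 (-(skM X w₀ t)) →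
      ∃ u ∈ Icc s t, w₀ + X u + max 0 (-(skM X w₀ u)) = 0) := by
  refine ⟨?_, ?_, ?_, ?_⟩
  · intro t ht
    have h1 : skM X w₀ t ≤ w₀ + X t := skM_le X hX w₀ ⟨ht, le_rfl⟩
    have h2 : -(skM X w₀ t) ≤ max 0 (-(skM X w₀ t)) := le_max_right _ _
    linarith
  · -- continuity
    intro a ha
    rw [Metric.continuousWithinAt_iff]
    intro ε hε
    have huc : UniformContinuousOn X (Icc 0 (a + 1)) :=
      isCompact_Icc.uniformContinuousOn_of_continuous hX.continuousOn
    rw [Metric.uniformContinuousOn_iff] at huc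
    obtain ⟨δ, hδ, hd⟩ := huc ε hε
    refine ⟨min δ 1, lt_min hδ one_pos, fun t ht hta => ?_⟩
    set s := min t a with hsdef
    set T := max t a with hTdef
    have hs0 : 0 ≤ s := le_min ht ha
    have hsT : s ≤ T := min_le_max
    have hTs : T - s < min δ 1 := by
      rw [hTdef, hsdef, max_sub_min_eq_abs, ← Real.dist_eq, dist_comm]; exact hta
    have hT1 : T ≤ a + 1 := by
      have h2 : T - s < 1 := lt_of_lt_of_le hTs (min_le_right _ _)
      have h3 : s ≤ a := min_le_right t a
      linarith
    obtain ⟨u, hsu, huT, hkey⟩ := skM_key X hX w₀ hs0 hsT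
    have hmono := skM_anti X hX w₀ hs0 hsT
    have hXd : |X s - X u| < ε := by
      have h1 : s ∈ Icc 0 (a + 1) := ⟨hs0, (min_le_right t a).trans (by linarith)⟩
      have h2 : u ∈ Icc 0 (a + 1) := ⟨hs0.trans hsu, huT.trans hT1⟩
      have : dist s u < δ := by
        rw [Real.dist_eq, abs_sub_comm, abs_of_nonneg (by linarith)]
        have := min_le_left δ (1:ℝ); linarith
      simpa [Real.dist_eq] using hd s h1 u h2 this
    have hm : |skM X w₀ s - skM X w₀ T| < ε := by
      rw [abs_of_nonneg (by linarith)]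
      calc skM X w₀ s - skM X w₀ T ≤ X s - X u := hkey
        _ ≤ |X s - X u| := le_abs_self _
        _ < ε := hXd
    have hlip : |max 0 (-(skM X w₀ t)) - max 0 (-(skM X w₀ a))| ≤
        |skM X w₀ t - skM X w₀ a| := by
      rw [max_comm 0 (-(skM X w₀ t)), max_comm 0 (-(skM X w₀ a))]
      calc |max (-(skM X w₀ t)) 0 - max (-(skM X w₀ a)) 0|
          ≤ |(-(skM X w₀ t)) - (-(skM X w₀ a))| := abs_max_sub_max_le_abs _ _ _
        _ = |skM X w₀ t - skM X w₀ a| := by rw [neg_sub_neg, abs_sub_comm]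
    have heq : |skM X w₀ t - skM X w₀ a| = |skM X w₀ s - skM X w₀ T| := by
      rcases le_total t a with h | h
      · simp [hsdef, hTdef, min_eq_left h, max_eq_right h, abs_sub_comm]
      · simp [hsdef, hTdef, min_eq_right h, max_eq_left h, abs_sub_comm]
    rw [Real.dist_eq]
    calc |max 0 (-(skM X w₀ t)) - max 0 (-(skM X w₀ a))| ≤ |skM X w₀ t - skM X w₀ a| := hlip
      _ = |skM X w₀ s - skM X w₀ T| := heq
      _ < ε := hm
  · -- U 0 = 0
    have : skM X w₀ 0 = w₀ := by
      unfold skM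
      rw [Icc_self, image_singleton, csInf_singleton, hX0, add_zero]
    rw [this, max_eq_left (by linarith)]
  · -- increase only when W = 0
    intro s t hs hst hU
    have ht : (0:ℝ) ≤ t := hs.trans hst.le
    have hUt : 0 < max 0 (-(skM X w₀ t)) := (le_max_left _ _).trans_lt hU
    have hmt : skM X w₀ t < 0 := by
      by_contra h
      push_neg at h
      rw [max_eq_left (by linarith)] at hUt
      exact lt_irrefl _ hUt
    have hUt' : max 0 (-(skM X w₀ t)) = -(skM X w₀ t) := max_eq_right (by linarith)
    have hms : skM X w₀ t < skM X w₀ s := by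
      have h1 : -(skM X w₀ s) ≤ max 0 (-(skM X w₀ s)) := le_max_right _ _
      rw [hUt'] at hU; linarith
    obtain ⟨u, hu, hmin, heq⟩ := skM_min X hX w₀ ht
    have hsu : s < u := by
      by_contra h
      push_neg at h
      have := skM_le X hX w₀ (⟨hu.1, h⟩ : u ∈ Icc 0 s)
      rw [← heq] at this; linarith
    have hmu : skM X w₀ u = w₀ + X u := by
      have h1 : skM X w₀ u ≤ w₀ + X u := skM_le X hX w₀ ⟨hu.1, le_rfl⟩
      have h2 : skM X w₀ t ≤ skM X w₀ u := skM_anti X hX w₀ hu.1 hu.2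
      rw [heq] at h2; linarith
    refine ⟨u, ⟨hsu.le, hu.2⟩, ?_⟩
    rw [hmu, max_eq_right (by rw [hmu] at *; rw [heq] at hmt; linarith)]
    ring



open Set

/-- The Skorokhod regulator: `U t = max(0, - inf_{0 ≤ s ≤ t} (w₀ + X s))`. -/
noncomputable def skorokhodU (X : ℝ → ℝ) (w₀ : ℝ) (t : ℝ) : ℝ :=
  max 0 (-(sInf ((fun s => w₀ + X s) '' Icc 0 t)))

/-- The reflected path `W t = w₀ + X t + U t`. -/
noncomputable def skorokhodW (X : ℝ → ℝ) (w₀ : ℝ) (t : ℝ) : ℝ :=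
  w₀ + X t + skorokhodU X w₀ t

/-- Skorokhod reflection on the half-line: `W ≥ 0`, `U` is continuous,
nondecreasing, starts at `0`, and increases only at times where `W = 0`. -/
theorem skorokhod_reflection (X : ℝ → ℝ) (hX : Continuous X) (hX0 : X 0 = 0)
    (w₀ : ℝ) (hw₀ : 0 ≤ w₀) :
    (∀ t, 0 ≤ t → 0 ≤ skorokhodW X w₀ t) ∧
    ContinuousOn (skorokhodU X w₀) (Ici 0) ∧
    MonotoneOn (skorokhodU X w₀) (Ici 0) ∧
    skorokhodU X w₀ 0 = 0 ∧
    (∀ s t, 0 ≤ s → s < t → skorokhodU X w₀ s < skorokhodU X w₀ t →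
      ∃ u ∈ Icc s t, skorokhodW X w₀ u = 0) := by
  obtain ⟨h1, h2, h4, h5⟩ := skorokhod_reflection' X hX hX0 w₀ hw₀
  exact ⟨h1, h2, skU_mono X hX w₀, h4, h5⟩
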